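/- Let r ∈ R and s ∈ S. The following four statements are equivalent: (1) B r = ι s; (2) B r ∈ ι(S), and for the unique s' ∈ S with ι s' = B r one has g(s') = g(s) for every continuous linear functional g : S → ℝ; (3) ι s ∈ B(R), and l(B r) = l(ι s) for every continuous linear functional l on the subspace B(R) of H (with the H-norm); (4) l(B r − ι s) = 0 for every linear functional l : Y → ℝ that is bounded with respect to ‖·‖_Y, equivalently ‖B r − ι s‖_Y = 0. (Paper's Lemma 2.5.) -/

import Mathlib

open scoped RealInnerProductSpace


/-- The sum-space norm `‖y‖_Y = inf {‖B r‖_H + ‖s‖_S | y = B r + ι s}` on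
`Y = B(R) + ι(S)`. -/
noncomputable def normY
    {R S H : Type*}
    [NormedAddCommGroup R] [InnerProductSpace ℝ R]
    [NormedAddCommGroup S] [InnerProductSpace ℝ S]
    [NormedAddCommGroup H] [InnerProductSpace ℝ H]
    (B : R →L[ℝ] H) (ι : S →L[ℝ] H) (y : H) : ℝ :=
  sInf {t : ℝ | ∃ (r : R) (s : S), y = B r + ι s ∧ t = ‖B r‖ + ‖s‖}

/-- Paper's Lemma 2.5.  For `r ∈ R`, `s ∈ S` the following are equivalent:
(1) `B r = ι s`;
(2) `B r ∈ ι(S)` and every continuous linear functional on `S` agrees on `s` and on the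
unique `s'` with `ι s' = B r`;
(3) `ι s ∈ B(R)` and every continuous linear functional on the subspace `B(R)` of `H`
agrees on `B r` and `ι s`;
(4) `‖B r − ι s‖_Y = 0`, i.e. every `‖·‖_Y`-bounded linear functional on `Y`
annihilates `B r − ι s`. -/
theorem equivalent_characterizations_of_Bu_eq_phi
    {R S H : Type*}
    [NormedAddCommGroup R] [InnerProductSpace ℝ R] [CompleteSpace R]
    [NormedAddCommGroup S] [InnerProductSpace ℝ S] [CompleteSpace S]
    [NormedAddCommGroup H] [InnerProductSpace ℝ H] [CompleteSpace H]
    (ι : S →L[ℝ] H) (hι : Function.Injective ι)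
    (B : R →L[ℝ] H) (hBR : IsClosed (Set.range B))
    (r : R) (s : S) :
    (B r = ι s ↔
      ((∃ s' : S, ι s' = B r) ∧
        ∀ s' : S, ι s' = B r → ∀ g : S →L[ℝ] ℝ, g s' = g s)) ∧
    (B r = ι s ↔
      ((∃ r' : R, B r' = ι s) ∧
        ∀ (h' : ι s ∈ LinearMap.range (B : R →ₗ[ℝ] H))
          (l : (LinearMap.range (B : R →ₗ[ℝ] H) : Submodule ℝ H) →L[ℝ] ℝ),
          l ⟨B r, LinearMap.mem_range_self (B : R →ₗ[ℝ] H) r⟩ = l ⟨ι s, h'⟩)) ∧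
    (B r = ι s ↔ normY B ι (B r - ι s) = 0) := by
  refine ⟨?_, ?_, ?_⟩
  · constructor
    · intro h
      refine ⟨⟨s, h.symm⟩, fun s' hs' g => ?_⟩
      rw [hι (hs'.trans h)]
    · rintro ⟨⟨s₀, hs₀⟩, hg⟩
      have h1 := hg s₀ hs₀ (innerSL ℝ (s₀ - s))
      have h2 : inner (𝕜 := ℝ) (s₀ - s) (s₀ - s) = (0 : ℝ) := by
        rw [inner_sub_right, sub_eq_zero]; simpa [inner_sub_left] using h1
      have : s₀ = s := sub_eq_zero.mp (inner_self_eq_zero.mp h2)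
      rw [← hs₀, this]
  · constructor
    · intro h
      refine ⟨⟨r, h⟩, fun h' l => ?_⟩
      congr 1
      exact Subtype.ext h
    · rintro ⟨⟨r₀, hr₀⟩, hl⟩
      have h' : ι s ∈ LinearMap.range (B : R →ₗ[ℝ] H) := ⟨r₀, hr₀⟩
      set x : (LinearMap.range (B : R →ₗ[ℝ] H) : Submodule ℝ H) := ⟨B r, LinearMap.mem_range_self (B : R →ₗ[ℝ] H) r⟩
      set y : (LinearMap.range (B : R →ₗ[ℝ] H) : Submodule ℝ H) := ⟨ι s, h'⟩
      have h1 := hl h' (innerSL ℝ (x - y))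
      have h2 : inner (𝕜 := ℝ) (x - y) (x - y) = (0 : ℝ) := by
        rw [inner_sub_right, sub_eq_zero]; exact h1
      have : x = y := sub_eq_zero.mp (inner_self_eq_zero.mp h2)
      exact congrArg Subtype.val this
  · set T : Set ℝ := {t : ℝ | ∃ (r' : R) (s' : S), B r - ι s = B r' + ι s' ∧ t = ‖B r'‖ + ‖s'‖}
      with hT
    have hne : T.Nonempty := ⟨‖B r‖ + ‖(-s : S)‖, r, -s, by simp [sub_eq_add_neg], rfl⟩
    have hbdd : BddBelow T := by
      refine ⟨0, fun t ht => ?_⟩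
      obtain ⟨r', s', _, rfl⟩ := ht
      positivity
    constructor
    · intro h
      have h0 : (0 : ℝ) ∈ T := ⟨0, 0, by simp [h], by simp⟩
      have hle : normY B ι (B r - ι s) ≤ 0 := csInf_le hbdd h0
      have hge : 0 ≤ normY B ι (B r - ι s) :=
        le_csInf hne fun t ht => by
          obtain ⟨r', s', _, rfl⟩ := ht; positivity
      linarith
    · intro h
      set C := max 1 ‖ι‖ with hC
      have hC1 : (1 : ℝ) ≤ C := le_max_left _ _
      have hCpos : (0 : ℝ) < C := lt_of_lt_of_le one_pos hC1
      have hlow : ∀ t ∈ T, ‖B r - ι s‖ / C ≤ t := by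
        intro t ht
        obtain ⟨r', s', heq, rfl⟩ := ht
        rw [div_le_iff₀ hCpos]
        calc ‖B r - ι s‖ = ‖B r' + ι s'‖ := by rw [heq]
          _ ≤ ‖B r'‖ + ‖ι s'‖ := norm_add_le _ _
          _ ≤ ‖B r'‖ + ‖ι‖ * ‖s'‖ := by gcongr; exact ι.le_opNorm s'
          _ ≤ C * ‖B r'‖ + C * ‖s'‖ := by
              gcongr
              · nlinarith [norm_nonneg (B r')]
              · exact le_max_right _ _
          _ = (‖B r'‖ + ‖s'‖) * C := by ring
      have : ‖B r - ι s‖ / C ≤ 0 := h ▸ le_csInf hne hlow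
      have hnorm : ‖B r - ι s‖ ≤ 0 := by
        have := (div_le_iff₀ hCpos).mp this
        simpa using this
      have : B r - ι s = 0 := by
        have := le_antisymm hnorm (norm_nonneg _)
        exact norm_eq_zero.mp this
      exact sub_eq_zero.mp this
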